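/- Case r = 2: Let d ≥ 0 and let Γ ⊆ ℙⁿ be a finite set satisfying CB(2) with |Γ| ≤ 2d + 3. Then Γ lies on a projective linear subspace of dimension at most d (i.e., the linear span of Γ has dimension at most d). -/

import Mathlib

open MvPolynomial

/-- A point of `ℙⁿ` over `k`, realized as the projectivization of `k^(n+1)`. -/
abbrev ProjSpace (k : Type*) [Field k] (n : ℕ) : Type _ :=
  Projectivization k (Fin (n + 1) → k)

/-- The projective linear subspace of `ℙⁿ` determined by a linear subspace
`W ⊆ k^(n+1)`, as a set of points. -/
def projSet {k : Type*} [Field k] {n : ℕ} (W : Submodule k (Fin (n + 1) → k)) :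
    Set (ProjSpace k n) :=
  {x | x.rep ∈ W}

/-- The Cayley–Bacharach condition `CB(r)`: every homogeneous polynomial of degree `r`
vanishing at all points of `Γ` except possibly one vanishes on all of `Γ`. -/
def IsCB {k : Type*} [Field k] {n : ℕ} (r : ℕ) (Γ : Set (ProjSpace k n)) : Prop :=
  ∀ F : MvPolynomial (Fin (n + 1)) k, F.IsHomogeneous r →
    ∀ x ∈ Γ, (∀ y ∈ Γ, y ≠ x → MvPolynomial.eval y.rep F = 0) →
      MvPolynomial.eval x.rep F = 0

/-- A plane configuration in `ℙⁿ`: a finite collection of distinct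
positive-dimensional projective linear subspaces. -/
structure PlaneConfig (k : Type*) [Field k] (n : ℕ) where
  length : ℕ
  P : Fin length → Submodule k (Fin (n + 1) → k)
  inj : Function.Injective P
  posdim : ∀ i, 2 ≤ Module.finrank k (P i)

namespace PlaneConfig

variable {k : Type*} [Field k] {n : ℕ}

/-- The dimension of a plane configuration: the sum of the (projective) dimensions
of its planes. -/
noncomputable def dim (C : PlaneConfig k n) : ℕ := ∑ i, (Module.finrank k (C.P i) - 1)

/-- The set of points of `ℙⁿ` lying on the configuration. -/
def points (C : PlaneConfig k n) : Set (ProjSpace k n) := ⋃ i, projSet (C.P i)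

/-- A configuration is skew if its planes are pairwise (projectively) disjoint. -/
def Skew (C : PlaneConfig k n) : Prop := ∀ i j, i ≠ j → C.P i ⊓ C.P j = ⊥

end PlaneConfig

section Aux

open Module

variable {k : Type*} [Field k] {n : ℕ}

private noncomputable def linPoly (f : Module.Dual k (Fin (n + 1) → k)) :
    MvPolynomial (Fin (n + 1)) k :=
  ∑ i, MvPolynomial.C (f fun j => if i = j then 1 else 0) * MvPolynomial.X i

private lemma linPoly_homog (f : Module.Dual k (Fin (n + 1) → k)) :
    (linPoly f).IsHomogeneous 1 :=
  MvPolynomial.IsHomogeneous.sum _ _ _ fun i _ =>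
    (MvPolynomial.isHomogeneous_X k i).C_mul _

private lemma eval_linPoly (f : Module.Dual k (Fin (n + 1) → k)) (w : Fin (n + 1) → k) :
    MvPolynomial.eval w (linPoly f) = f w := by
  rw [linPoly, map_sum, LinearMap.pi_apply_eq_sum_univ f w]
  simp [mul_comm]

private lemma rep_injective :
    Function.Injective (Projectivization.rep : ProjSpace k n → (Fin (n + 1) → k)) := by
  intro x y h
  exact Quotient.out_injective (Subtype.ext h)

end Aux


/-- Case `r = 2`: a finite set satisfying `CB(2)` with at most `2d + 3` points lies on a
projective linear subspace of dimension at most `d`. -/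
theorem case_r_eq_two {k : Type*} [Field k] [Infinite k] {n : ℕ} (d : ℕ)
    (Γ : Set (ProjSpace k n)) (hfin : Γ.Finite) (hCB : IsCB 2 Γ)
    (hcard : Γ.ncard ≤ 2 * d + 3) :
    ∃ W : Submodule k (Fin (n + 1) → k),
      Module.finrank k W ≤ d + 1 ∧ Γ ⊆ projSet W := by
  classical
  set W : Submodule k (Fin (n + 1) → k) :=
    Submodule.span k (Projectivization.rep '' Γ) with hW
  refine ⟨W, ?_, fun y hy => Submodule.subset_span ⟨y, hy, rfl⟩⟩
  by_contra hbig
  push_neg at hbig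
  set t := Module.finrank k W with ht
  have htd : d + 2 ≤ t := hbig
  obtain ⟨b, hbsub, hbspan, hbli⟩ := exists_linearIndependent k (Projectivization.rep '' Γ)
  have hbfin : b.Finite := (hfin.image _).subset hbsub
  haveI := hbfin.fintype
  have hbcard : b.ncard = t := by
    rw [Set.ncard_eq_toFinset_card' b, ht, hW, ← hbspan, finrank_span_set_eq_card hbli]
  set Γb : Set (ProjSpace k n) := Γ ∩ (Projectivization.rep ⁻¹' b) with hΓb
  set ΓR : Set (ProjSpace k n) := Γ \ Γb with hΓR
  have himg : Projectivization.rep '' Γb = b := by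
    apply Set.Subset.antisymm
    · rintro _ ⟨y, ⟨-, hyb⟩, rfl⟩; exact hyb
    · intro v hv
      obtain ⟨y, hyΓ, rfl⟩ := hbsub hv
      exact ⟨y, ⟨hyΓ, hv⟩, rfl⟩
  have hΓbcard : Γb.ncard = t := by
    rw [← hbcard, ← himg, Set.ncard_image_of_injective _ rep_injective]
  have hΓRcard : ΓR.ncard = Γ.ncard - t := by
    rw [hΓR, Set.ncard_diff Set.inter_subset_left (hfin.subset Set.inter_subset_left), hΓbcard]
  set spanR : Submodule k (Fin (n + 1) → k) :=
    Submodule.span k (Projectivization.rep '' ΓR) with hspanR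
  have hΓRfin : (Projectivization.rep '' ΓR).Finite := (hfin.diff : (Γ \ Γb).Finite).image _
  haveI := hΓRfin.fintype
  have hsRle : Module.finrank k spanR ≤ ΓR.ncard := by
    refine (finrank_span_le_card _).trans ?_
    rw [← Set.ncard_eq_toFinset_card', Set.ncard_image_of_injective _ rep_injective]
  have hvex : ∃ v ∈ b, v ∉ spanR := by
    by_contra hall
    push_neg at hall
    have hle : W ≤ spanR := by
      rw [hW, ← hbspan]
      exact Submodule.span_le.2 hall
    haveI : FiniteDimensional k spanR := FiniteDimensional.span_of_finite k hΓRfin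
    have h1 : t ≤ Module.finrank k spanR := Submodule.finrank_mono hle
    omega
  obtain ⟨v, hvb, hvR⟩ := hvex
  obtain ⟨x, hxΓ, hxrep⟩ := hbsub hvb
  -- v is not in the span of the other basis vectors
  have hv1 : v ∉ Submodule.span k (b \ {v}) := by
    have himg2 : (fun j : b => (j : Fin (n + 1) → k)) '' {j : b | (j : Fin (n + 1) → k) ≠ v}
        = b \ {v} := by
      ext w
      constructor
      · rintro ⟨⟨j, hj⟩, hne, rfl⟩; exact ⟨hj, hne⟩
      · rintro ⟨hwb, hwv⟩; exact ⟨⟨w, hwb⟩, hwv, rfl⟩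
    have := LinearIndependent.notMem_span_image hbli (x := (⟨v, hvb⟩ : b))
      (s := {j : b | (j : Fin (n + 1) → k) ≠ v}) (by simp)
    rwa [himg2] at this
  obtain ⟨f₁, hf₁v, hf₁map⟩ :=
    (Submodule.span k (b \ {v})).exists_dual_map_eq_bot_of_notMem hv1 inferInstance
  obtain ⟨f₂, hf₂v, hf₂map⟩ := spanR.exists_dual_map_eq_bot_of_notMem hvR inferInstance
  have hf₁ : ∀ w ∈ Submodule.span k (b \ {v}), f₁ w = 0 := by
    intro w hw
    have : f₁ w ∈ (Submodule.span k (b \ {v})).map f₁ := ⟨w, hw, rfl⟩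
    rw [hf₁map] at this
    exact (Submodule.mem_bot k).1 this
  have hf₂ : ∀ w ∈ spanR, f₂ w = 0 := by
    intro w hw
    have : f₂ w ∈ spanR.map f₂ := ⟨w, hw, rfl⟩
    rw [hf₂map] at this
    exact (Submodule.mem_bot k).1 this
  have hvanish : ∀ y ∈ Γ, y ≠ x →
      MvPolynomial.eval y.rep (linPoly f₁ * linPoly f₂) = 0 := by
    intro y hyΓ hyx
    rw [map_mul, eval_linPoly, eval_linPoly]
    by_cases hyb : Projectivization.rep y ∈ b
    · have hne : Projectivization.rep y ≠ v := by
        intro h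
        exact hyx (rep_injective (h.trans hxrep.symm))
      have : f₁ (Projectivization.rep y) = 0 :=
        hf₁ _ (Submodule.subset_span ⟨hyb, hne⟩)
      rw [this, zero_mul]
    · have hyR : y ∈ ΓR := ⟨hyΓ, fun h => hyb h.2⟩
      have : f₂ (Projectivization.rep y) = 0 :=
        hf₂ _ (Submodule.subset_span ⟨y, hyR, rfl⟩)
      rw [this, mul_zero]
  have hzero := hCB (linPoly f₁ * linPoly f₂)
    ((linPoly_homog f₁).mul (linPoly_homog f₂)) x hxΓ hvanish
  rw [map_mul, eval_linPoly, eval_linPoly, hxrep] at hzero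
  exact mul_ne_zero hf₁v hf₂v hzero
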